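/- Let ρ be a density matrix on a finite-dimensional Hilbert space A ≅ A_g ⊗ A_p with dim A_g = d₁, dim A_p = d₂, and let Π be a rank-d₁ orthogonal projector on A with Tr[Πρ] ≥ 1 − ε. Then there exist a unitary U on A, a density matrix ρ̃ on A_g, and a unit vector |0⟩ ∈ A_p such that ‖UρU† − ρ̃ ⊗ |0⟩⟨0|‖₁ ≤ 3√ε. -/

import Mathlib

open Matrix BigOperators ComplexOrder Kronecker

noncomputable def traceNorm {n : Type*} [Fintype n] [DecidableEq n] (A : Matrix n n ℂ) : ℝ :=
  (((Matrix.posSemidef_conjTranspose_mul_self A).1.eigenvectorUnitary.1 *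
      diagonal (((↑) : ℝ → ℂ) ∘ Real.sqrt ∘ (Matrix.posSemidef_conjTranspose_mul_self A).1.eigenvalues) *
      (star (Matrix.posSemidef_conjTranspose_mul_self A).1.eigenvectorUnitary : Matrix n n ℂ)).trace).re

set_option linter.unusedSectionVars false

section helpers
variable {n : Type*} [Fintype n] [DecidableEq n]
open scoped MatrixOrder

lemma traceNorm_eq_of_sq {A B : Matrix n n ℂ} (hB : B.PosSemidef) (hBA : B * B = Aᴴ * A) :
    traceNorm A = B.trace.re := by
  have hU' : ((Matrix.posSemidef_conjTranspose_mul_self A).1.eigenvectorUnitary : Matrix n n ℂ)ᴴ *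
      ((Matrix.posSemidef_conjTranspose_mul_self A).1.eigenvectorUnitary : Matrix n n ℂ) = 1 := by
    have := (Matrix.mem_unitaryGroup_iff').mp (Matrix.posSemidef_conjTranspose_mul_self A).1.eigenvectorUnitary.2
    rwa [Matrix.star_eq_conjTranspose] at this
  have hc : ∀ Z : Matrix n n ℂ, ((Matrix.posSemidef_conjTranspose_mul_self A).1.eigenvectorUnitary : Matrix n n ℂ)ᴴ *
      (((Matrix.posSemidef_conjTranspose_mul_self A).1.eigenvectorUnitary : Matrix n n ℂ) * Z) = Z := fun Z => by
    rw [← mul_assoc, hU', one_mul]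
  have hS : ((Matrix.posSemidef_conjTranspose_mul_self A).1.eigenvectorUnitary.1 *
      diagonal (((↑) : ℝ → ℂ) ∘ Real.sqrt ∘ (Matrix.posSemidef_conjTranspose_mul_self A).1.eigenvalues) *
      ((Matrix.posSemidef_conjTranspose_mul_self A).1.eigenvectorUnitary : Matrix n n ℂ)ᴴ).PosSemidef := by
    apply Matrix.PosSemidef.mul_mul_conjTranspose_same
    refine Matrix.posSemidef_diagonal_iff.mpr fun i => ?_
    simp only [Function.comp_apply]
    rw [Complex.zero_le_real]; exact Real.sqrt_nonneg _
  have hSS : ((Matrix.posSemidef_conjTranspose_mul_self A).1.eigenvectorUnitary.1 *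
      diagonal (((↑) : ℝ → ℂ) ∘ Real.sqrt ∘ (Matrix.posSemidef_conjTranspose_mul_self A).1.eigenvalues) *
      ((Matrix.posSemidef_conjTranspose_mul_self A).1.eigenvectorUnitary : Matrix n n ℂ)ᴴ) *
      ((Matrix.posSemidef_conjTranspose_mul_self A).1.eigenvectorUnitary.1 *
      diagonal (((↑) : ℝ → ℂ) ∘ Real.sqrt ∘ (Matrix.posSemidef_conjTranspose_mul_self A).1.eigenvalues) *
      ((Matrix.posSemidef_conjTranspose_mul_self A).1.eigenvectorUnitary : Matrix n n ℂ)ᴴ) = Aᴴ * A := by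
    have hsp := (Matrix.posSemidef_conjTranspose_mul_self A).1.spectral_theorem
    rw [Unitary.conjStarAlgAut_apply, Matrix.star_eq_conjTranspose] at hsp
    conv_rhs => rw [hsp]
    simp only [mul_assoc, hc]
    rw [← mul_assoc (diagonal _), diagonal_mul_diagonal]
    congr 3; funext i
    simp only [Function.comp_apply, ← Complex.ofReal_mul]
    rw [Real.mul_self_sqrt ((Matrix.posSemidef_conjTranspose_mul_self A).eigenvalues_nonneg i)]
    rfl
  have := (CFC.mul_self_eq_mul_self_iff _ B hS.nonneg hB.nonneg).mp (hSS.trans hBA.symm)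
  unfold traceNorm
  rw [← this]
  rfl


lemma traceNorm_psd {A : Matrix n n ℂ} (hA : A.PosSemidef) : traceNorm A = A.trace.re := by
  exact traceNorm_eq_of_sq hA (by rw [hA.1.eq])

lemma traceNorm_neg_psd {A : Matrix n n ℂ} (hA : A.PosSemidef) : traceNorm (-A) = A.trace.re := by
  exact traceNorm_eq_of_sq hA (by rw [conjTranspose_neg, hA.1.eq, neg_mul_neg])


lemma trace_conjTranspose_mul (A B : Matrix n n ℂ) :
    (Aᴴ * B).trace = ∑ p : n × n, (starRingEnd ℂ) (A p.1 p.2) * B p.1 p.2 := by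
  rw [Matrix.trace, Fintype.sum_prod_type]
  simp only [Matrix.diag_apply, Matrix.mul_apply, Matrix.conjTranspose_apply]
  exact Finset.sum_comm

lemma cs_trace (A B : Matrix n n ℂ) :
    ((Aᴴ * B).trace).re ≤ Real.sqrt ((Aᴴ * A).trace).re * Real.sqrt ((Bᴴ * B).trace).re := by
  let x : EuclideanSpace ℂ (n × n) := WithLp.toLp 2 (fun p : n × n => A p.1 p.2)
  let y : EuclideanSpace ℂ (n × n) := WithLp.toLp 2 (fun p : n × n => B p.1 p.2)
  have hxy : (Aᴴ * B).trace = inner ℂ x y := by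
    rw [trace_conjTranspose_mul]; rw [PiLp.inner_apply]; simp only [RCLike.inner_apply']; rfl
  have hx : Real.sqrt ((Aᴴ * A).trace).re = ‖x‖ := by
    rw [trace_conjTranspose_mul, norm_eq_sqrt_re_inner (𝕜 := ℂ), PiLp.inner_apply]; simp only [RCLike.inner_apply']; rfl
  have hy : Real.sqrt ((Bᴴ * B).trace).re = ‖y‖ := by
    rw [trace_conjTranspose_mul, norm_eq_sqrt_re_inner (𝕜 := ℂ), PiLp.inner_apply]; simp only [RCLike.inner_apply']; rfl
  rw [hxy, hx, hy]
  exact re_inner_le_norm (𝕜 := ℂ) x y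


lemma conj_mul_conj {V : Matrix n n ℂ} (hV' : Vᴴ * V = 1) (X Y : Matrix n n ℂ) :
    (V * X * Vᴴ) * (V * Y * Vᴴ) = V * (X * Y) * Vᴴ := by
  have hc : ∀ Z : Matrix n n ℂ, Vᴴ * (V * Z) = Z := fun Z => by
    rw [← mul_assoc, hV', one_mul]
  simp only [mul_assoc, hc]

lemma conj_diag_trace {V : Matrix n n ℂ} (hV' : Vᴴ * V = 1) (f : n → ℂ) :
    (V * diagonal f * Vᴴ).trace = ∑ i, f i := by
  rw [trace_mul_cycle, hV', one_mul, trace_diagonal]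

lemma conj_diag_conjTranspose (V : Matrix n n ℂ) (f : n → ℂ) :
    (V * diagonal f * Vᴴ)ᴴ = V * diagonal (fun i => star (f i)) * Vᴴ := by
  simp only [conjTranspose_mul, conjTranspose_conjTranspose, diagonal_conjTranspose, mul_assoc]
  rfl

lemma spectral_decomp {A : Matrix n n ℂ} (hA : A.IsHermitian) :
    A = (hA.eigenvectorUnitary : Matrix n n ℂ) * diagonal (fun i => (hA.eigenvalues i : ℂ)) *
      (hA.eigenvectorUnitary : Matrix n n ℂ)ᴴ := by
  have := hA.spectral_theorem
  rw [Unitary.conjStarAlgAut_apply] at this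
  rwa [Matrix.star_eq_conjTranspose] at this

lemma traceNorm_hermitian {A : Matrix n n ℂ} (hA : A.IsHermitian) :
    traceNorm A = ∑ i, |hA.eigenvalues i| := by
  set V : Matrix n n ℂ := (hA.eigenvectorUnitary : Matrix n n ℂ) with hVdef
  have hV : V * Vᴴ = 1 := by
    have := (Matrix.mem_unitaryGroup_iff).mp hA.eigenvectorUnitary.2
    rwa [Matrix.star_eq_conjTranspose] at this
  have hV' : Vᴴ * V = 1 := by
    have := (Matrix.mem_unitaryGroup_iff').mp hA.eigenvectorUnitary.2
    rwa [Matrix.star_eq_conjTranspose] at this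
  set B : Matrix n n ℂ := V * diagonal (fun i => ((|hA.eigenvalues i| : ℝ) : ℂ)) * Vᴴ with hBdef
  have hBpsd : B.PosSemidef := by
    apply Matrix.PosSemidef.mul_mul_conjTranspose_same
    refine Matrix.posSemidef_diagonal_iff.mpr fun i => ?_
    rw [Complex.zero_le_real]
    exact abs_nonneg _
  have hsq : B ^ 2 = Aᴴ * A := by
    rw [pow_two, hBdef, conj_mul_conj hV', hA.eq]
    conv_rhs => rw [spectral_decomp hA, ← hVdef]
    rw [conj_mul_conj hV', diagonal_mul_diagonal, diagonal_mul_diagonal]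
    have hfun : (fun i => ((|hA.eigenvalues i| : ℝ) : ℂ) * ((|hA.eigenvalues i| : ℝ) : ℂ))
        = (fun i => ((hA.eigenvalues i : ℝ) : ℂ) * ((hA.eigenvalues i : ℝ) : ℂ)) := by
      funext i
      simp only [← Complex.ofReal_mul, abs_mul_abs_self]
    rw [hfun]
  have hB : traceNorm A = B.trace.re := traceNorm_eq_of_sq hBpsd (by rw [← pow_two]; exact hsq)
  rw [hB, hBdef, conj_diag_trace hV', Complex.re_sum]
  norm_num

lemma exists_sign {A : Matrix n n ℂ} (hA : A.IsHermitian) :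
    ∃ S : Matrix n n ℂ, Sᴴ = S ∧ S * S = 1 ∧ ((S * A).trace).re = traceNorm A := by
  set V : Matrix n n ℂ := (hA.eigenvectorUnitary : Matrix n n ℂ) with hVdef
  have hV : V * Vᴴ = 1 := by
    have := (Matrix.mem_unitaryGroup_iff).mp hA.eigenvectorUnitary.2
    rwa [Matrix.star_eq_conjTranspose] at this
  have hV' : Vᴴ * V = 1 := by
    have := (Matrix.mem_unitaryGroup_iff').mp hA.eigenvectorUnitary.2
    rwa [Matrix.star_eq_conjTranspose] at this
  set s : n → ℝ := fun i => if hA.eigenvalues i < 0 then -1 else 1 with hsdef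
  refine ⟨V * diagonal (fun i => (s i : ℂ)) * Vᴴ, ?_, ?_, ?_⟩
  · rw [conj_diag_conjTranspose]
    congr 2
    funext i
    simp [Complex.star_def, Complex.conj_ofReal]
  · rw [conj_mul_conj hV', diagonal_mul_diagonal]
    have : (fun i => (s i : ℂ) * (s i : ℂ)) = fun _ => (1 : ℂ) := by
      funext i
      by_cases h : hA.eigenvalues i < 0 <;> simp [hsdef, h]
    rw [this, diagonal_one, mul_one, hV]
  · have key : (V * diagonal (fun i => (s i : ℂ)) * Vᴴ) * A
        = V * diagonal (fun i => (s i : ℂ) * (hA.eigenvalues i : ℂ)) * Vᴴ := by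
      conv_lhs => rw [show A = V * diagonal (fun i => (hA.eigenvalues i : ℂ)) * Vᴴ from spectral_decomp hA]
      rw [conj_mul_conj hV', diagonal_mul_diagonal]
    rw [key, conj_diag_trace hV', traceNorm_hermitian hA, Complex.re_sum]
    congr 1
    funext i
    rw [← Complex.ofReal_mul, Complex.ofReal_re]
    by_cases h : hA.eigenvalues i < 0
    · rw [hsdef]; simp only [if_pos h]; rw [abs_of_neg h]; ring
    · rw [hsdef]; simp only [if_neg h]; rw [abs_of_nonneg (not_lt.mp h)]; ring


lemma psd_diag_re_nonneg {A : Matrix n n ℂ} (hA : A.PosSemidef) (i : n) : 0 ≤ (A i i).re := by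
  have h := hA.dotProduct_mulVec_nonneg (Pi.single i 1)
  rw [mulVec_single] at h
  have : star (Pi.single i (1:ℂ)) ⬝ᵥ (fun j => A j i * 1) = A i i := by
    simp only [dotProduct, Pi.star_apply, Pi.single_apply, mul_one]
    rw [Finset.sum_eq_single i]
    · simp
    · intro b _ hb; simp [hb]
    · intro h; exact absurd (Finset.mem_univ i) h
  rw [show MulOpposite.op (1:ℂ) • A.col i = (fun j => A j i * 1) by funext j; simp, this] at h
  exact (Complex.le_def.mp h).1

lemma psd_trace_re_nonneg {A : Matrix n n ℂ} (hA : A.PosSemidef) : 0 ≤ A.trace.re := by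
  rw [Matrix.trace, Complex.re_sum]
  exact Finset.sum_nonneg fun i _ => psd_diag_re_nonneg hA i

lemma trace_mul_psd_nonneg {A B : Matrix n n ℂ} (hA : A.PosSemidef) (hB : B.PosSemidef) :
    0 ≤ ((A * B).trace).re := by
  set R := CFC.sqrt A with hR
  have h1 : A * B = R * (R * B) := by rw [← mul_assoc, CFC.sqrt_mul_sqrt_self A hA.nonneg]
  have h2 : ((A * B).trace) = (R * B * R).trace := by
    rw [h1, trace_mul_comm R (R * B)]
  have h3 : (R * B * R).PosSemidef := by
    have := hB.mul_mul_conjTranspose_same R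
    rwa [(CFC.sqrt_nonneg A).posSemidef.1.eq] at this
  rw [h2]
  exact psd_trace_re_nonneg h3

lemma vecMulVec_psd (v : n → ℂ) : (Matrix.vecMulVec v (star v)).PosSemidef := by
  refine Matrix.PosSemidef.of_dotProduct_mulVec_nonneg ?_ ?_
  · ext i j
    simp [Matrix.vecMulVec_apply, Matrix.conjTranspose_apply, mul_comm]
  · intro x
    have hv : Matrix.vecMulVec v (star v) *ᵥ x = (fun i => v i * (star v ⬝ᵥ x)) := by
      funext i
      simp [Matrix.mulVec, Matrix.vecMulVec_apply, dotProduct, Finset.mul_sum, mul_assoc]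
    rw [hv]
    have : star x ⬝ᵥ (fun i => v i * (star v ⬝ᵥ x)) = star (star v ⬝ᵥ x) * (star v ⬝ᵥ x) := by
      simp only [dotProduct, Pi.star_apply, star_sum, star_mul', star_star, Finset.sum_mul]
      congr 1; funext i; ring
    rw [this]
    exact star_mul_self_nonneg _



lemma trace_le_traceNorm {A S : Matrix n n ℂ} (hA : A.IsHermitian)
    (hS : Sᴴ = S) (hS2 : S * S = 1) : ((S * A).trace).re ≤ traceNorm A := by
  set V : Matrix n n ℂ := (hA.eigenvectorUnitary : Matrix n n ℂ) with hVdef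
  have hV : V * Vᴴ = 1 := by
    have := (Matrix.mem_unitaryGroup_iff).mp hA.eigenvectorUnitary.2
    rwa [Matrix.star_eq_conjTranspose] at this
  have hV' : Vᴴ * V = 1 := by
    have := (Matrix.mem_unitaryGroup_iff').mp hA.eigenvectorUnitary.2
    rwa [Matrix.star_eq_conjTranspose] at this
  set M : Matrix n n ℂ := Vᴴ * S * V with hMdef
  have hMunit : Mᴴ * M = 1 := by
    have hcV : ∀ Z : Matrix n n ℂ, V * (Vᴴ * Z) = Z := fun Z => by rw [← mul_assoc, hV, one_mul]
    have hcS : ∀ Z : Matrix n n ℂ, S * (S * Z) = Z := fun Z => by rw [← mul_assoc, hS2, one_mul]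
    rw [hMdef]
    simp only [conjTranspose_mul, conjTranspose_conjTranspose, hS]
    simp only [mul_assoc, hcV, hcS]
    exact hV'
  have hMkk : ∀ k, ‖M k k‖ ≤ 1 := by
    intro k
    have h1 : (Mᴴ * M) k k = 1 := by rw [hMunit]; simp
    have h2 : ∑ i, Complex.normSq (M i k) = 1 := by
      have := congrArg Complex.re h1
      rw [Matrix.mul_apply, Complex.re_sum, Complex.one_re] at this
      rw [← this]
      congr 1; funext i
      rw [Matrix.conjTranspose_apply, Complex.star_def, ← Complex.normSq_eq_conj_mul_self, Complex.ofReal_re]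
    have h3 : Complex.normSq (M k k) ≤ 1 := by
      rw [← h2]
      exact Finset.single_le_sum (f := fun i => Complex.normSq (M i k))
        (fun i _ => Complex.normSq_nonneg _) (Finset.mem_univ k)
    have h4 := Complex.sq_norm (M k k)
    nlinarith [norm_nonneg (M k k)]
  have htr : (S * A).trace = ∑ k, M k k * (hA.eigenvalues k : ℂ) := by
    conv_lhs => rw [show A = V * diagonal (fun i => (hA.eigenvalues i : ℂ)) * Vᴴ from
      spectral_decomp hA]
    rw [show S * (V * diagonal (fun i => (hA.eigenvalues i : ℂ)) * Vᴴ)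
        = (S * V * diagonal (fun i => (hA.eigenvalues i : ℂ))) * Vᴴ by simp only [mul_assoc]]
    rw [trace_mul_comm, ← mul_assoc, ← mul_assoc, ← hMdef]
    rw [Matrix.trace]
    congr 1; funext k
    rw [Matrix.diag_apply, Matrix.mul_diagonal]
  rw [htr, Complex.re_sum, traceNorm_hermitian hA]
  apply Finset.sum_le_sum
  intro k _
  have : (M k k * (hA.eigenvalues k : ℂ)).re = (M k k).re * hA.eigenvalues k := by
    rw [Complex.mul_re, Complex.ofReal_re, Complex.ofReal_im]; ring
  rw [this]
  calc (M k k).re * hA.eigenvalues k ≤ |(M k k).re * hA.eigenvalues k| := le_abs_self _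
    _ = |(M k k).re| * |hA.eigenvalues k| := abs_mul _ _
    _ ≤ 1 * |hA.eigenvalues k| := by
        apply mul_le_mul_of_nonneg_right _ (abs_nonneg _)
        exact le_trans (Complex.abs_re_le_norm _) (hMkk k)
    _ = |hA.eigenvalues k| := one_mul _

lemma traceNorm_add_le {A B : Matrix n n ℂ} (hA : A.IsHermitian) (hB : B.IsHermitian) :
    traceNorm (A + B) ≤ traceNorm A + traceNorm B := by
  obtain ⟨S, hS, hS2, hSval⟩ := exists_sign (hA.add hB)
  rw [← hSval, mul_add, Matrix.trace_add, Complex.add_re]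
  exact add_le_add (trace_le_traceNorm hA hS hS2) (trace_le_traceNorm hB hS hS2)


lemma perm_conjTranspose (π : Equiv.Perm n) :
    ((π.toPEquiv.toMatrix : Matrix n n ℂ))ᴴ = (π.symm.toPEquiv.toMatrix : Matrix n n ℂ) := by
  ext i j
  simp only [conjTranspose_apply, PEquiv.toMatrix_apply, Equiv.toPEquiv_apply, Option.mem_def,
    Option.some.injEq]
  by_cases h : π j = i
  · have h2 : π.symm i = j := by rw [← h, Equiv.symm_apply_apply]
    rw [if_pos h, if_pos h2]
    exact star_one _
  · have h2 : ¬ (π.symm i = j) := fun hc => h (by rw [← hc, Equiv.apply_symm_apply])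
    rw [if_neg h, if_neg h2]
    exact star_zero _

lemma perm_mul_conjTranspose_self (π : Equiv.Perm n) :
    (π.toPEquiv.toMatrix : Matrix n n ℂ) * (π.toPEquiv.toMatrix : Matrix n n ℂ)ᴴ = 1 := by
  rw [perm_conjTranspose, ← PEquiv.toMatrix_trans, ← Equiv.toPEquiv_trans]
  simp [Equiv.self_trans_symm, Equiv.toPEquiv_refl]

lemma proj_conj {Q : Matrix n n ℂ} (hQherm : Qᴴ = Q) (hQproj : Q * Q = Q)
    (q : n → Prop) [DecidablePred q] (hcard : Q.rank = Fintype.card {x // q x}) :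
    ∃ U : Matrix n n ℂ, U * Uᴴ = 1 ∧ Uᴴ * U = 1 ∧
      U * Q * Uᴴ = diagonal (fun x => if q x then (1:ℂ) else 0) := by
  have hQ : Q.IsHermitian := hQherm
  set W : Matrix n n ℂ := (hQ.eigenvectorUnitary : Matrix n n ℂ) with hWdef
  have hW : W * Wᴴ = 1 := by
    have := (Matrix.mem_unitaryGroup_iff).mp hQ.eigenvectorUnitary.2
    rwa [Matrix.star_eq_conjTranspose] at this
  have hW' : Wᴴ * W = 1 := by
    have := (Matrix.mem_unitaryGroup_iff').mp hQ.eigenvectorUnitary.2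
    rwa [Matrix.star_eq_conjTranspose] at this
  have hdiag : Wᴴ * Q * W = diagonal (RCLike.ofReal ∘ hQ.eigenvalues) := by
    conv_lhs => rw [spectral_decomp hQ, ← hWdef]
    have hc : ∀ Z : Matrix n n ℂ, Wᴴ * (W * Z) = Z := fun Z => by rw [← mul_assoc, hW', one_mul]
    simp only [mul_assoc, hc]
    rw [hW', mul_one]; rfl
  -- eigenvalues are 0 or 1
  have h01 : ∀ k, hQ.eigenvalues k = 0 ∨ hQ.eigenvalues k = 1 := by
    intro k
    have hsq : (Wᴴ * Q * W) * (Wᴴ * Q * W) = Wᴴ * Q * W := by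
      have hc : ∀ Z : Matrix n n ℂ, W * (Wᴴ * Z) = Z := fun Z => by rw [← mul_assoc, hW, one_mul]
      have hcQ : ∀ Z : Matrix n n ℂ, Q * (Q * Z) = Q * Z := fun Z => by
        rw [← mul_assoc, hQproj]
      simp only [mul_assoc, hc, hcQ]
    rw [hdiag, diagonal_mul_diagonal] at hsq
    have hk := congrFun (congrFun (congrArg (fun M => M) hsq) k) k
    simp only [diagonal_apply_eq, Function.comp_apply] at hk
    have : (hQ.eigenvalues k : ℂ) * (hQ.eigenvalues k : ℂ) = (hQ.eigenvalues k : ℂ) := hk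
    have h2 : (hQ.eigenvalues k : ℂ) * ((hQ.eigenvalues k : ℂ) - 1) = 0 := by ring_nf; linear_combination this
    rcases mul_eq_zero.mp h2 with h | h
    · left; exact_mod_cast h
    · right; have : (hQ.eigenvalues k : ℂ) = 1 := by linear_combination h
      exact_mod_cast this
  set r : n → Prop := fun k => hQ.eigenvalues k = 1 with hrdef
  have hrcard : Fintype.card {k // r k} = Fintype.card {x // q x} := by
    rw [← hcard, hQ.rank_eq_card_non_zero_eigs]
    apply Fintype.card_congr
    apply Equiv.subtypeEquivRight
    intro k
    constructor
    · intro h; rw [h]; norm_num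
    · intro h
      rcases h01 k with h0 | h1
      · exact absurd h0 h
      · exact h1
  have hccard : Fintype.card {k // ¬ r k} = Fintype.card {x // ¬ q x} := by
    rw [Fintype.card_subtype_compl, Fintype.card_subtype_compl, hrcard]
  let e : {x // q x} ≃ {k // r k} := Fintype.equivOfCardEq hrcard.symm
  let f : {x // ¬ q x} ≃ {k // ¬ r k} := Fintype.equivOfCardEq hccard.symm
  let π : Equiv.Perm n := Equiv.subtypeCongr e f
  have hπ : ∀ x, r (π x) ↔ q x := by
    intro x
    by_cases h : q x
    · have : π x = (e ⟨x, h⟩ : {k // r k}).val := by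
        simp [π, Equiv.subtypeCongr, h]
      rw [this]
      exact ⟨fun _ => h, fun _ => (e ⟨x, h⟩).2⟩
    · have : π x = (f ⟨x, h⟩ : {k // ¬ r k}).val := by
        simp [π, Equiv.subtypeCongr, h]
      rw [this]
      exact ⟨fun hr => absurd hr (f ⟨x, h⟩).2, fun hq => absurd hq h⟩
  set P : Matrix n n ℂ := π.toPEquiv.toMatrix with hPdef
  have hPH : Pᴴ = π.symm.toPEquiv.toMatrix := perm_conjTranspose π
  have hPP : P * Pᴴ = 1 := perm_mul_conjTranspose_self π
  have hPP' : Pᴴ * P = 1 := by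
    rw [hPH, ← PEquiv.toMatrix_trans, ← Equiv.toPEquiv_trans]
    simp [Equiv.symm_trans_self, Equiv.toPEquiv_refl]
  refine ⟨P * Wᴴ, ?_, ?_, ?_⟩
  · rw [conjTranspose_mul, conjTranspose_conjTranspose]
    rw [show P * Wᴴ * (W * Pᴴ) = P * (Wᴴ * W) * Pᴴ by simp only [mul_assoc], hW', mul_one, hPP]
  · rw [conjTranspose_mul, conjTranspose_conjTranspose]
    rw [show W * Pᴴ * (P * Wᴴ) = W * (Pᴴ * P) * Wᴴ by simp only [mul_assoc], hPP', mul_one, hW]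
  · rw [conjTranspose_mul, conjTranspose_conjTranspose]
    rw [show P * Wᴴ * Q * (W * Pᴴ) = P * (Wᴴ * Q * W) * Pᴴ by simp only [mul_assoc], hdiag]
    rw [hPH, hPdef, PEquiv.toMatrix_toPEquiv_mul, PEquiv.mul_toMatrix_toPEquiv]
    ext x y
    simp only [submatrix_apply, Equiv.symm_symm, id]
    by_cases hxy : x = y
    · subst hxy
      rw [diagonal_apply_eq, diagonal_apply_eq, Function.comp_apply]
      by_cases h : q x
      · rw [if_pos h]
        have : hQ.eigenvalues (π x) = 1 := (hπ x).mpr h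
        rw [this]; norm_num
      · rw [if_neg h]
        have h1 : hQ.eigenvalues (π x) ≠ 1 := fun hc => h ((hπ x).mp hc)
        rcases h01 (π x) with h0 | hone
        · rw [h0]; norm_num
        · exact absurd hone h1
    · rw [diagonal_apply_ne _ (fun hc => hxy (π.injective hc)), diagonal_apply_ne _ hxy]

end helpers

/-- if `Tr[Πρ] ≥ 1 - ε` with `Π` a rank-`d₁` projector on `A ≅ A_g ⊗ A_p`,
then there is a unitary `U`, a density matrix `ρ̃` on `A_g` and a unit vector `v ∈ A_p`
with `‖U ρ U† - ρ̃ ⊗ |v⟩⟨v|‖₁ ≤ 3√ε`. -/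
lemma psd_smul_real {n : Type*} [Fintype n] [DecidableEq n] {A : Matrix n n ℂ}
    (hA : A.PosSemidef) {c : ℝ} (hc : 0 ≤ c) : (((c : ℂ)) • A).PosSemidef := by
  refine Matrix.PosSemidef.of_dotProduct_mulVec_nonneg ?_ ?_
  · show ((c : ℂ) • A)ᴴ = (c : ℂ) • A
    rw [conjTranspose_smul, hA.1.eq]
    congr 1
    simp [Complex.star_def, Complex.conj_ofReal]
  · intro x
    rw [smul_mulVec, dotProduct_smul, smul_eq_mul]
    exact mul_nonneg (Complex.zero_le_real.mpr hc) (hA.dotProduct_mulVec_nonneg x)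

open scoped MatrixOrder in
set_option maxHeartbeats 2000000 in
theorem purity_concentration_local {d₁ d₂ : ℕ} (ε : ℝ) (hε : ε ∈ Set.Icc (0 : ℝ) 1)
    (ρ : Matrix (Fin d₁ × Fin d₂) (Fin d₁ × Fin d₂) ℂ)
    (hρ : ρ.PosSemidef) (hρtr : ρ.trace = 1)
    (Q : Matrix (Fin d₁ × Fin d₂) (Fin d₁ × Fin d₂) ℂ)
    (hQherm : Qᴴ = Q) (hQproj : Q * Q = Q) (hQrank : Q.rank = d₁)
    (hQρ : 1 - ε ≤ ((Q * ρ).trace).re) :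
    ∃ U : Matrix (Fin d₁ × Fin d₂) (Fin d₁ × Fin d₂) ℂ,
      U ∈ Matrix.unitaryGroup (Fin d₁ × Fin d₂) ℂ ∧
      ∃ ρt : Matrix (Fin d₁) (Fin d₁) ℂ, ρt.PosSemidef ∧ ρt.trace = 1 ∧
      ∃ v : Fin d₂ → ℂ, (∑ i, Complex.normSq (v i)) = 1 ∧
        traceNorm (U * ρ * Uᴴ - ρt ⊗ₖ Matrix.vecMulVec v (star v)) ≤ 3 * Real.sqrt ε := by
  classical
  have hne : Nonempty (Fin d₁ × Fin d₂) := by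
    by_contra h
    rw [not_nonempty_iff] at h
    have := hρtr
    simp [Matrix.trace] at this
  obtain ⟨⟨i0, a0⟩⟩ := hne
  haveI : NeZero d₁ := ⟨i0.pos.ne'⟩
  haveI : NeZero d₂ := ⟨a0.pos.ne'⟩
  set q : Fin d₁ × Fin d₂ → Prop := fun x => x.2 = 0 with hqdef
  have hqcard : Q.rank = Fintype.card {x : Fin d₁ × Fin d₂ // q x} := by
    rw [hQrank]
    have eqv : {x : Fin d₁ × Fin d₂ // q x} ≃ Fin d₁ :=
      { toFun := fun x => x.1.1
        invFun := fun i => ⟨(i, 0), rfl⟩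
        left_inv := by rintro ⟨⟨i, a⟩, ha⟩; exact Subtype.ext (Prod.ext rfl ha.symm)
        right_inv := fun i => rfl }
    rw [Fintype.card_congr eqv, Fintype.card_fin]
  obtain ⟨U, hUU, hU'U, hUQU⟩ := proj_conj hQherm hQproj q hqcard
  refine ⟨U, by rw [Matrix.mem_unitaryGroup_iff, Matrix.star_eq_conjTranspose]; exact hUU, ?_⟩
  set ρ' : Matrix (Fin d₁ × Fin d₂) (Fin d₁ × Fin d₂) ℂ := U * ρ * Uᴴ with hρ'def
  have hρ'psd : ρ'.PosSemidef := hρ.mul_mul_conjTranspose_same U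
  have hρ'herm : ρ'.IsHermitian := hρ'psd.1
  have hρ'tr : ρ'.trace = 1 := by
    rw [hρ'def, trace_mul_cycle, hU'U, one_mul, hρtr]
  set qc : Fin d₁ × Fin d₂ → ℂ := fun x => if q x then 1 else 0 with hqcdef
  set D := diagonal qc with hDdef
  have hstar : star qc = qc := funext fun x => by by_cases h : q x <;> simp [hqcdef, h]
  have hDherm : Dᴴ = D := by rw [hDdef, diagonal_conjTranspose, hstar]
  have hDpsd : D.PosSemidef := by
    refine posSemidef_diagonal_iff.mpr (fun x => ?_)
    by_cases h : q x
    · simp only [hqcdef, if_pos h]; exact zero_le_one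
    · simp only [hqcdef, if_neg h]; exact le_rfl
  have hDD : D * D = D := by
    have hmul : (fun x => qc x * qc x) = qc := funext fun x => by
      simp only [hqcdef]
      by_cases h : q x
      · rw [if_pos h]; ring
      · rw [if_neg h]; ring
    rw [hDdef, diagonal_mul_diagonal, hmul]
  set P : Matrix (Fin d₁ × Fin d₂) (Fin d₁ × Fin d₂) ℂ := 1 - D with hPdef
  have hPdiag : P = diagonal (fun x => if q x then (0:ℂ) else 1) := by
    have hsub : (fun x => 1 - qc x) = (fun x => if q x then (0:ℂ) else 1) := funext fun x => by
      simp only [hqcdef]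
      by_cases h : q x
      · rw [if_pos h, if_pos h]; ring
      · rw [if_neg h, if_neg h]; ring
    rw [hPdef, hDdef, ← diagonal_one, diagonal_sub, hsub]
  have hPherm : Pᴴ = P := by rw [hPdef, conjTranspose_sub, conjTranspose_one, hDherm]
  have hPpsd : P.PosSemidef := by
    rw [hPdiag]
    refine posSemidef_diagonal_iff.mpr (fun x => ?_)
    by_cases h : q x
    · simp only [if_pos h]; exact le_rfl
    · simp only [if_neg h]; exact zero_le_one
  have hPP : P * P = P := by
    rw [hPdef, sub_mul, one_mul, mul_sub, mul_one, hDD]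
    simp
  have htrQρ' : (D * ρ').trace = (Q * ρ).trace := by
    have h1 : D * ρ' = U * (Q * ρ) * Uᴴ := by
      rw [← hUQU, hρ'def]
      exact conj_mul_conj hU'U Q ρ
    rw [h1, trace_mul_cycle, hU'U, one_mul]
  set t : ℝ := ((D * ρ').trace).re with htdef
  set εP : ℝ := ((P * ρ').trace).re with hεPdef
  have hsum : t + εP = 1 := by
    have hadd : D * ρ' + P * ρ' = ρ' := by
      rw [hPdef, sub_mul, one_mul]
      abel
    have h2 := congrArg (fun M : Matrix (Fin d₁ × Fin d₂) (Fin d₁ × Fin d₂) ℂ => M.trace.re) hadd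
    simp only [trace_add, Complex.add_re] at h2
    rw [htdef, hεPdef, h2, hρ'tr, Complex.one_re]
  have ht0 : 0 ≤ t := trace_mul_psd_nonneg hDpsd hρ'psd
  have hεP0 : 0 ≤ εP := trace_mul_psd_nonneg hPpsd hρ'psd
  have htlb : 1 - ε ≤ t := by rw [htdef, htrQρ']; exact hQρ
  have ht1 : t ≤ 1 := by linarith
  have hεPε : εP ≤ ε := by linarith
  set v : Fin d₂ → ℂ := Pi.single 0 1 with hvdef
  have hvnorm : (∑ i, Complex.normSq (v i)) = 1 := by
    rw [hvdef]
    simp [Pi.single_apply, apply_ite Complex.normSq, Finset.sum_ite_eq']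
  set E := vecMulVec v (star v) with hEdef
  have hEtr : E.trace = 1 := by
    rw [hEdef, Matrix.trace]
    simp [Matrix.vecMulVec_apply, hvdef, Pi.single_apply, apply_ite (starRingEnd ℂ),
      Finset.sum_ite_eq']
  set σ : Matrix (Fin d₁) (Fin d₁) ℂ :=
    ρ'.submatrix (fun i => (i, 0)) (fun i => (i, 0)) with hσdef
  have hσpsd : σ.PosSemidef := hρ'psd.submatrix _
  have hDρD : D * ρ' * D = σ ⊗ₖ E := by
    ext x y
    rw [hDdef, Matrix.mul_diagonal, Matrix.diagonal_mul, kroneckerMap_apply]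
    obtain ⟨i, a⟩ := x
    obtain ⟨j, b⟩ := y
    rw [hσdef, submatrix_apply, hEdef, vecMulVec_apply]
    by_cases ha : a = 0 <;> by_cases hb : b = 0 <;>
      simp [hqcdef, hqdef, ha, hb, hvdef, Pi.single_apply] <;> ring
  have hσtrace : σ.trace = (D * ρ').trace := by
    rw [Matrix.trace, Matrix.trace, Fintype.sum_prod_type]
    refine Finset.sum_congr rfl fun i _ => ?_
    have hterm : ∀ a : Fin d₂, (D * ρ').diag (i, a) = if a = 0 then ρ' (i, a) (i, a) else 0 := by
      intro a
      rw [Matrix.diag_apply, hDdef, Matrix.diagonal_mul]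
      by_cases h : a = 0 <;> simp [hqcdef, hqdef, h]
    rw [Finset.sum_congr rfl (fun a _ => hterm a),
      Finset.sum_ite_eq' Finset.univ (0 : Fin d₂) (fun a => ρ' (i, a) (i, a))]
    simp [hσdef, Matrix.diag_apply]
  have hσt : σ.trace = (t : ℝ) := by
    have hherm : (starRingEnd ℂ) σ.trace = σ.trace := by
      rw [← Complex.star_def, ← Matrix.trace_conjTranspose, hσpsd.1.eq]
    have him : σ.trace.im = 0 := Complex.conj_eq_iff_im.mp hherm
    apply Complex.ext
    · rw [htdef, ← hσtrace, Complex.ofReal_re]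
    · rw [him, Complex.ofReal_im]
  have hXpsd : (σ ⊗ₖ E).PosSemidef := by
    rw [← hDρD]
    have := hρ'psd.mul_mul_conjTranspose_same D
    rwa [hDherm] at this
  have hXtr : (σ ⊗ₖ E).trace = (t : ℝ) := by
    rw [trace_kronecker, hσt, hEtr, mul_one]
  by_cases htpos : 0 < t
  · -- main case
    have htne : (t : ℂ) ≠ 0 := by exact_mod_cast htpos.ne'
    have hcast : ((t⁻¹ : ℝ) : ℂ) = (t : ℂ)⁻¹ := by push_cast; rfl
    refine ⟨((t : ℂ)⁻¹) • σ, ?_, ?_, v, hvnorm, ?_⟩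
    · rw [← hcast]
      exact psd_smul_real hσpsd (inv_nonneg.mpr ht0)
    · rw [trace_smul, hσt, smul_eq_mul, inv_mul_cancel₀ htne]
    · rw [← hEdef]
      set c : ℝ := t⁻¹ - 1 with hcdef
      have hc0 : 0 ≤ c := by
        rw [hcdef]
        have h1 : t * t⁻¹ = 1 := mul_inv_cancel₀ htpos.ne'
        nlinarith [inv_nonneg.mpr ht0]
      set M := ((c : ℝ) : ℂ) • (σ ⊗ₖ E) with hMdef
      have hMpsd : M.PosSemidef := psd_smul_real hXpsd hc0
      have hccast : ((c : ℝ) : ℂ) = (t : ℂ)⁻¹ - 1 := by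
        rw [hcdef]; push_cast; ring
      have decomp : ρ' - ((t : ℂ)⁻¹ • σ) ⊗ₖ E = (ρ' - D * ρ' * D) + (-M) := by
        rw [smul_kronecker, hDρD, hMdef, hccast, sub_smul, one_smul]
        abel
      rw [decomp]
      have hDρDpsd : (D * ρ' * D).PosSemidef := by
        have := hρ'psd.mul_mul_conjTranspose_same D
        rwa [hDherm] at this
      have hHherm : (ρ' - D * ρ' * D).IsHermitian := hρ'herm.sub hDρDpsd.1
      have hMnegherm : (-M).IsHermitian := hMpsd.1.neg
      have hMtr : traceNorm (-M) = 1 - t := by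
        rw [traceNorm_neg_psd hMpsd, hMdef, trace_smul, hXtr, smul_eq_mul,
          ← Complex.ofReal_mul, Complex.ofReal_re, hcdef]
        field_simp
      have hgentle : traceNorm (ρ' - D * ρ' * D) ≤ 2 * Real.sqrt ε := by
        obtain ⟨S, hS, hS2, hSval⟩ := exists_sign hHherm
        rw [← hSval]
        set R := CFC.sqrt ρ' with hRdef
        have hRR : R * R = ρ' := CFC.sqrt_mul_sqrt_self ρ' hρ'psd.nonneg
        have hRH : Rᴴ = R := (CFC.sqrt_nonneg ρ').posSemidef.1
        have hsplit : (S * (ρ' - D * ρ' * D)).trace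
            = ((P * S) * ρ').trace + ((D * S * P) * ρ').trace := by
          have h1 : (S * (D * ρ' * D)).trace = ((D * S * D) * ρ').trace := by
            rw [show S * (D * ρ' * D) = (S * D * ρ') * D by simp only [mul_assoc],
              trace_mul_comm, show D * (S * D * ρ') = (D * S * D) * ρ' by simp only [mul_assoc]]
          have h2 : (P * S) * ρ' + (D * S * P) * ρ' = S * ρ' - (D * S * D) * ρ' := by
            rw [hPdef]
            noncomm_ring
          rw [mul_sub, trace_sub, h1, ← trace_add, h2, trace_sub]
        have hterm1 : (((P * S) * ρ').trace).re ≤ Real.sqrt εP * 1 := by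
          have e1 : ((P * S) * ρ').trace = ((P * R)ᴴ * (S * R)).trace := by
            rw [conjTranspose_mul, hRH, hPherm, ← hRR,
              show (P * S) * (R * R) = ((P * S) * R) * R by simp only [mul_assoc],
              trace_mul_comm,
              show R * (P * S * R) = (R * P) * (S * R) by simp only [mul_assoc]]
          have hA2 : (((P * R)ᴴ * (P * R)).trace).re = εP := by
            rw [conjTranspose_mul, hRH, hPherm,
              show (R * P) * (P * R) = R * (P * (P * R)) by simp only [mul_assoc],
              show P * (P * R) = (P * P) * R by simp only [mul_assoc], hPP,
              trace_mul_comm, show (P * R) * R = P * (R * R) by simp only [mul_assoc], hRR]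
          have hB2 : (((S * R)ᴴ * (S * R)).trace).re = 1 := by
            rw [conjTranspose_mul, hRH, hS,
              show (R * S) * (S * R) = R * (S * (S * R)) by simp only [mul_assoc],
              show S * (S * R) = (S * S) * R by simp only [mul_assoc], hS2, one_mul, hRR,
              hρ'tr, Complex.one_re]
          calc (((P * S) * ρ').trace).re = (((P * R)ᴴ * (S * R)).trace).re := by rw [e1]
            _ ≤ Real.sqrt (((P * R)ᴴ * (P * R)).trace).re
                * Real.sqrt (((S * R)ᴴ * (S * R)).trace).re := cs_trace _ _
            _ = Real.sqrt εP * 1 := by rw [hA2, hB2, Real.sqrt_one]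
        have hterm2 : (((D * S * P) * ρ').trace).re ≤ Real.sqrt t * Real.sqrt εP := by
          have e2 : ((D * S * P) * ρ').trace = ((D * R)ᴴ * (S * (P * R))).trace := by
            rw [conjTranspose_mul, hRH, hDherm, ← hRR,
              show (D * S * P) * (R * R) = ((D * S * P) * R) * R by simp only [mul_assoc],
              trace_mul_comm,
              show R * (D * S * P * R) = (R * D) * (S * (P * R)) by simp only [mul_assoc]]
          have hA2 : (((D * R)ᴴ * (D * R)).trace).re = t := by
            rw [conjTranspose_mul, hRH, hDherm,
              show (R * D) * (D * R) = R * (D * (D * R)) by simp only [mul_assoc],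
              show D * (D * R) = (D * D) * R by simp only [mul_assoc], hDD,
              trace_mul_comm, show (D * R) * R = D * (R * R) by simp only [mul_assoc], hRR]
          have hB2 : (((S * (P * R))ᴴ * (S * (P * R))).trace).re = εP := by
            rw [conjTranspose_mul, conjTranspose_mul, hRH, hPherm, hS,
              show ((R * P) * S) * (S * (P * R)) = R * (P * ((S * S) * (P * R)))
                by simp only [mul_assoc], hS2, one_mul,
              show R * (P * (P * R)) = R * ((P * P) * R) by simp only [mul_assoc], hPP,
              trace_mul_comm, show (P * R) * R = P * (R * R) by simp only [mul_assoc], hRR]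
          calc (((D * S * P) * ρ').trace).re = (((D * R)ᴴ * (S * (P * R))).trace).re := by rw [e2]
            _ ≤ Real.sqrt (((D * R)ᴴ * (D * R)).trace).re
                * Real.sqrt (((S * (P * R))ᴴ * (S * (P * R))).trace).re := cs_trace _ _
            _ = Real.sqrt t * Real.sqrt εP := by rw [hA2, hB2]
        have hsε : Real.sqrt εP ≤ Real.sqrt ε := Real.sqrt_le_sqrt hεPε
        have hst : Real.sqrt t ≤ 1 := by
          rw [show (1 : ℝ) = Real.sqrt 1 from (Real.sqrt_one).symm]
          exact Real.sqrt_le_sqrt ht1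
        have hsεnn : 0 ≤ Real.sqrt εP := Real.sqrt_nonneg _
        rw [hsplit, Complex.add_re]
        have := mul_le_mul hst hsε hsεnn (by norm_num)
        nlinarith [hterm1, hterm2]
      have htri := traceNorm_add_le hHherm hMnegherm
      have hεsqrt : ε ≤ Real.sqrt ε := by
        nlinarith [Real.sq_sqrt hε.1, Real.sqrt_nonneg ε, hε.2]
      calc traceNorm ((ρ' - D * ρ' * D) + -M)
          ≤ traceNorm (ρ' - D * ρ' * D) + traceNorm (-M) := htri
        _ ≤ 2 * Real.sqrt ε + (1 - t) := by rw [hMtr]; linarith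
        _ ≤ 3 * Real.sqrt ε := by nlinarith [htlb, hεsqrt]
  · -- degenerate case t = 0
    have ht0' : t = 0 := le_antisymm (not_lt.mp htpos) ht0
    have hε1 : ε = 1 := le_antisymm hε.2 (by linarith)
    set ρt : Matrix (Fin d₁) (Fin d₁) ℂ := diagonal (Pi.single 0 1) with hρtdef
    have hρtpsd : ρt.PosSemidef := by
      rw [hρtdef]
      refine posSemidef_diagonal_iff.mpr (fun i => ?_)
      by_cases h : i = 0 <;> simp [Pi.single_apply, h]
    have hρttr : ρt.trace = 1 := by
      rw [hρtdef, trace_diagonal]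
      simp [Pi.single_apply, Finset.sum_ite_eq']
    refine ⟨ρt, hρtpsd, hρttr, v, hvnorm, ?_⟩
    rw [← hEdef]
    set w : Fin d₁ × Fin d₂ → ℂ := fun x => if x = (0, 0) then 1 else 0 with hwdef
    have hw : ρt ⊗ₖ E = vecMulVec w (star w) := by
      ext x y
      obtain ⟨i, a⟩ := x
      obtain ⟨j, b⟩ := y
      rw [kroneckerMap_apply, hρtdef, hEdef, vecMulVec_apply, vecMulVec_apply]
      simp only [hwdef, hvdef, Pi.star_apply, Matrix.diagonal_apply, Pi.single_apply,
        Prod.mk.injEq, apply_ite (starRingEnd ℂ), _root_.map_one, _root_.map_zero]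
      by_cases hi0 : i = 0 <;> by_cases hj0 : j = 0 <;>
        by_cases ha : a = 0 <;> by_cases hb : b = 0 <;>
        simp [hi0, hj0, ha, hb, eq_comm] <;> ring
    have hkrpsd : (ρt ⊗ₖ E).PosSemidef := by rw [hw]; exact vecMulVec_psd w
    have hkrtr : (ρt ⊗ₖ E).trace = 1 := by rw [trace_kronecker, hρttr, hEtr, mul_one]
    have htri := traceNorm_add_le hρ'herm hkrpsd.1.neg
    rw [sub_eq_add_neg]
    calc traceNorm (ρ' + -(ρt ⊗ₖ E)) ≤ traceNorm ρ' + traceNorm (-(ρt ⊗ₖ E)) := htri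
      _ = 2 := by
          rw [traceNorm_psd hρ'psd, traceNorm_neg_psd hkrpsd, hρ'tr, hkrtr]
          norm_num
      _ ≤ 3 * Real.sqrt ε := by rw [hε1, Real.sqrt_one]; norm_num
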